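/- For integers 1 ≤ m ≤ k and n ≥ l ≥ k+1, the number op_{n,k,=l}^m of ordered preference sets (a_1,…,a_n) of length n with exactly k flaws, leading term a_1 = m, and max{a_i : 1 ≤ i ≤ n} = l, satisfies (n−m+k+2)(n+l−m−1) · op_{n,k,=l}^m = [(n−l+2k−m+4)(n−m+k+1) − (l−k−2)] · C(n+l−m−1, l−k−2). -/

import Mathlib

/-- The first unoccupied parking space `j` with `p ≤ j ≤ n`, if any. -/
def firstFree (n : ℕ) (occ : Finset ℕ) (p : ℕ) : Option ℕ :=
  (List.range' p (n + 1 - p)).find? (fun j => decide (j ∉ occ))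

/-- Number of cars that fail to park, processing the preference list in order,
given the set of already occupied spaces. -/
def flawsFrom (n : ℕ) : List ℕ → Finset ℕ → ℕ
  | [], _ => 0
  | p :: rest, occ =>
    match firstFree n occ p with
    | none => flawsFrom n rest occ + 1
    | some j => flawsFrom n rest (insert j occ)

/-- The number of flaws (unparked cars) of a preference list of length `n`. -/
def flaws (n : ℕ) (a : List ℕ) : ℕ := flawsFrom n a ∅

/-- A preference set of length `n`: a list of length `n` with entries in `{1, …, n}`. -/
def IsPrefSet (n : ℕ) (a : List ℕ) : Prop :=
  a.length = n ∧ ∀ x ∈ a, 1 ≤ x ∧ x ≤ n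

/-- An ordered preference set of length `n`: a nondecreasing preference set. -/
def IsOrderedPrefSet (n : ℕ) (a : List ℕ) : Prop :=
  IsPrefSet n a ∧ a.Pairwise (· ≤ ·)

/-- `op_{n,≥k}`: number of ordered preference sets of length `n` with at least `k` flaws. -/
noncomputable def opGe (n k : ℕ) : ℕ :=
  {a : List ℕ | IsOrderedPrefSet n a ∧ k ≤ flaws n a}.ncard

/-- `op_{n,≤k}`: number of ordered preference sets of length `n` with at most `k` flaws. -/
noncomputable def opLe (n k : ℕ) : ℕ :=
  {a : List ℕ | IsOrderedPrefSet n a ∧ flaws n a ≤ k}.ncard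

/-- `op_{n,k}`: number of ordered preference sets of length `n` with exactly `k` flaws. -/
noncomputable def opEq (n k : ℕ) : ℕ :=
  {a : List ℕ | IsOrderedPrefSet n a ∧ flaws n a = k}.ncard

/-- `op_{n,≥k,≤l}`: at least `k` flaws, every entry at most `l`. -/
noncomputable def opGeLe (n k l : ℕ) : ℕ :=
  {a : List ℕ | IsOrderedPrefSet n a ∧ k ≤ flaws n a ∧ ∀ x ∈ a, x ≤ l}.ncard

/-- `op_{n,≥k,≤l}^m`: at least `k` flaws, every entry at most `l`, leading term `m`. -/
noncomputable def opGeLeLead (n k l m : ℕ) : ℕ :=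
  {a : List ℕ | IsOrderedPrefSet n a ∧ k ≤ flaws n a ∧ (∀ x ∈ a, x ≤ l) ∧
    a.head? = some m}.ncard

/-- `op_{n,k,≤l}^m`: exactly `k` flaws, every entry at most `l`, leading term `m`. -/
noncomputable def opEqLeLead (n k l m : ℕ) : ℕ :=
  {a : List ℕ | IsOrderedPrefSet n a ∧ flaws n a = k ∧ (∀ x ∈ a, x ≤ l) ∧
    a.head? = some m}.ncard

/-- `op_{n,k}^m`: exactly `k` flaws, leading term `m`. -/
noncomputable def opLead (n k m : ℕ) : ℕ :=
  {a : List ℕ | IsOrderedPrefSet n a ∧ flaws n a = k ∧ a.head? = some m}.ncard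

/-- `op_{n,k,=l}^m`: exactly `k` flaws, maximal entry exactly `l`, leading term `m`. -/
noncomputable def opMaxLead (n k l m : ℕ) : ℕ :=
  {a : List ℕ | IsOrderedPrefSet n a ∧ flaws n a = k ∧ (∀ x ∈ a, x ≤ l) ∧ l ∈ a ∧
    a.head? = some m}.ncard

/-- Binomial coefficient `C(a, b)` with an integer lower index, which is `0`
when `b < 0` (the standard convention). -/
def chooseInt (a : ℕ) (b : ℤ) : ℕ := if 0 ≤ b then a.choose b.toNat else 0

/-! Part A : park simulation -/

def park (n : ℕ) : ℕ → List ℕ → ℕ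
  | _, [] => 0
  | b, x :: t => if max x (b+1) ≤ n then park n (max x (b+1)) t else t.length + 1

lemma find?_range'_eq_some {p : ℕ → Bool} {F : ℕ} :
    ∀ {s len : ℕ}, s ≤ F → F < s + len → p F = true → (∀ j, s ≤ j → j < F → p j = false) →
      (List.range' s len).find? p = some F := by
  intro s len
  induction len generalizing s with
  | zero => omega
  | succ len ih =>
    intro h1 h2 hF hlow
    rw [List.range'_succ]
    rcases eq_or_lt_of_le h1 with rfl | hlt
    · simp [List.find?_cons, hF]
    · have hs : p s = false := hlow s le_rfl hlt
      rw [List.find?_cons, hs]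
      exact ih hlt (by omega) hF (fun j hj1 hj2 => hlow j (by omega) hj2)

lemma firstFree_eq_some {n : ℕ} {occ : Finset ℕ} {x F : ℕ} (h1 : x ≤ F) (h2 : F ≤ n)
    (h3 : F ∉ occ) (h4 : ∀ j, x ≤ j → j < F → j ∈ occ) : firstFree n occ x = some F := by
  apply find?_range'_eq_some h1 (by omega)
  · simp [h3]
  · intro j hj1 hj2; simp [h4 j hj1 hj2]

lemma firstFree_eq_none {n : ℕ} {occ : Finset ℕ} {x : ℕ} (h : ∀ j, x ≤ j → j ≤ n → j ∈ occ) :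
    firstFree n occ x = none := by
  rw [firstFree, List.find?_eq_none]
  intro j hj
  rw [List.mem_range'_1] at hj
  simp [h j hj.1 (by omega)]

lemma flawsFrom_all_fail (n : ℕ) :
    ∀ (r : List ℕ) (occ : Finset ℕ), (∀ x ∈ r, firstFree n occ x = none) →
      flawsFrom n r occ = r.length := by
  intro r
  induction r with
  | nil => simp [flawsFrom]
  | cons x t ih =>
    intro occ h
    rw [flawsFrom, h x (by simp)]
    simp [ih occ (fun y hy => h y (by simp [hy]))]

lemma flawsFrom_eq_park (n : ℕ) :
    ∀ (r : List ℕ) (occ : Finset ℕ) (b : ℕ), r.Pairwise (· ≤ ·) →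
      (∀ x ∈ r, 1 ≤ x ∧ x ≤ n) → (∀ j ∈ occ, j ≤ b) →
      (∀ x ∈ r, ∀ j, x ≤ j → j ≤ b → j ∈ occ) →
      flawsFrom n r occ = park n b r := by
  intro r
  induction r with
  | nil => intro occ b _ _ _ _; rfl
  | cons x t ih =>
    intro occ b hs hbd hocc hI
    have hxn : 1 ≤ x ∧ x ≤ n := hbd x (by simp)
    by_cases hB : max x (b+1) ≤ n
    · -- car parks at B
      have hff : firstFree n occ x = some (max x (b+1)) := by
        apply firstFree_eq_some (le_max_left _ _) hB
        · intro hmem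
          exact absurd (hocc _ hmem) (by omega)
        · intro j hj1 hj2
          have hjb : j ≤ b := by omega
          exact hI x (by simp) j hj1 hjb
      rw [flawsFrom, hff, park, if_pos hB]
      apply ih _ _ hs.of_cons (fun y hy => hbd y (by simp [hy]))
      · intro j hj
        rcases Finset.mem_insert.mp hj with rfl | hj'
        · exact le_rfl
        · have := hocc j hj'; omega
      · intro y hy j hj1 hj2
        have hxy : x ≤ y := (List.pairwise_cons.mp hs).1 y hy
        rcases le_or_gt j b with hjb | hjb
        · exact Finset.mem_insert_of_mem (hI x (by simp) j (by omega) hjb)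
        · have : j = max x (b+1) := by omega
          simp [this]
    · -- car fails, and so do all the later cars
      have hbn : n ≤ b := by omega
      have hall : ∀ y ∈ x :: t, firstFree n occ y = none := by
        intro y hy
        have hxy : x ≤ y := by
          rcases hy with _ | hy
          · exact le_rfl
          · exact (List.pairwise_cons.mp hs).1 y (by assumption)
        exact firstFree_eq_none (fun j hj1 hj2 => hI x (by simp) j (by omega) (by omega))
      rw [flawsFrom, hall x (by simp), flawsFrom_all_fail n t occ
        (fun y hy => hall y (by simp [hy])), park, if_neg hB]

lemma flaws_eq_park (n : ℕ) (a : List ℕ) (hs : a.Pairwise (· ≤ ·))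
    (hbd : ∀ x ∈ a, 1 ≤ x ∧ x ≤ n) : flaws n a = park n 0 a := by
  apply flawsFrom_eq_park n a ∅ 0 hs hbd (by simp)
  intro x hx j hj1 hj2
  have := (hbd x hx).1; omega

/-- Staircase condition: `a i ≤ d + i` (0-indexed). -/
def Stair : ℕ → List ℕ → Prop
  | _, [] => True
  | d, x :: t => x ≤ d ∧ Stair (d+1) t

lemma stair_of_big : ∀ (r : List ℕ) (N d : ℕ), (∀ x ∈ r, x ≤ N) → N ≤ d → Stair d r := by
  intro r
  induction r with
  | nil => intro _ _ _ _; trivial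
  | cons x t ih =>
    intro N d h hNd
    exact ⟨le_trans (h x (by simp)) hNd, ih N (d+1) (fun y hy => h y (by simp [hy])) (by omega)⟩

lemma stair_mono : ∀ (r : List ℕ) (d d' : ℕ), d ≤ d' → Stair d r → Stair d' r := by
  intro r
  induction r with
  | nil => intro _ _ _ _; trivial
  | cons x t ih =>
    intro d d' h hd
    exact ⟨le_trans hd.1 h, ih (d+1) (d'+1) (by omega) hd.2⟩

lemma park_le_length (n : ℕ) : ∀ (r : List ℕ) (b : ℕ), park n b r ≤ r.length := by
  intro r
  induction r with
  | nil => intro b; simp [park]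
  | cons x t ih =>
    intro b
    rw [park]
    split
    · exact le_trans (ih _) (by simp)
    · simp

lemma park_bound (n c : ℕ) : ∀ (r : List ℕ) (b : ℕ), park n b r ≤ c → c < r.length →
    b + r.length ≤ n + c := by
  intro r
  induction r with
  | nil => intro b _ h; simp at h
  | cons x t ih =>
    intro b hp hlen
    rw [park] at hp
    by_cases hB : max x (b+1) ≤ n
    · rw [if_pos hB] at hp
      rcases lt_or_ge c t.length with h1 | h1
      · have := ih (max x (b+1)) hp h1
        simp only [List.length_cons]
        omega
      · simp only [List.length_cons] at hlen ⊢
        omega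
    · rw [if_neg hB] at hp
      simp only [List.length_cons] at hlen
      omega

lemma park_le_iff_stair (n c : ℕ) : ∀ (r : List ℕ) (b d : ℕ), (∀ x ∈ r, x ≤ n) →
    d + r.length = n + c + 1 → b < d → (park n b r ≤ c ↔ Stair d r) := by
  intro r
  induction r with
  | nil => intro b d _ _ _; simp [park, Stair]
  | cons x t ih =>
    intro b d hbd hlen hb
    have hxn : x ≤ n := hbd x (by simp)
    simp only [List.length_cons] at hlen
    by_cases hc : t.length + 1 ≤ c
    · constructor
      · intro _
        refine ⟨by omega, stair_of_big t n (d+1) (fun y hy => hbd y (by simp [hy])) (by omega)⟩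
      · intro _
        exact le_trans (park_le_length n _ b) (by simpa using hc)
    · -- t.length ≥ c
      have htc : c ≤ t.length := by omega
      rw [park]
      constructor
      · intro hp
        have hB : max x (b+1) ≤ n := by
          by_contra hB
          rw [if_neg hB] at hp; omega
        rw [if_pos hB] at hp
        have hxd : x ≤ d := by
          rcases lt_or_ge c t.length with h1 | h1
          · have := park_bound n c t (max x (b+1)) hp h1
            omega
          · omega
        refine ⟨hxd, ?_⟩
        rw [← ih (max x (b+1)) (d+1) (fun y hy => hbd y (by simp [hy])) (by omega) (by omega)]
        exact hp
      · rintro ⟨hxd, hst⟩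
        have hB : max x (b+1) ≤ n := by omega
        rw [if_pos hB]
        rw [ih (max x (b+1)) (d+1) (fun y hy => hbd y (by simp [hy])) (by omega) (by omega)]
        exact hst

def Sset (l len d m : ℕ) : Set (List ℕ) :=
  {a | a.length = len ∧ a.Pairwise (· ≤ ·) ∧ (∀ x ∈ a, m ≤ x ∧ x ≤ l) ∧
    a.getLast? = some l ∧ Stair d a}

lemma finite_lists (b : ℕ) : ∀ (L : ℕ), {a : List ℕ | a.length = L ∧ ∀ x ∈ a, x ≤ b}.Finite := by
  intro L
  induction L with
  | zero =>
    apply Set.Finite.subset (Set.finite_singleton ([] : List ℕ))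
    rintro a ⟨ha, -⟩
    simp [List.length_eq_zero_iff.mp ha]
  | succ L ih =>
    apply Set.Finite.subset (Set.Finite.image (fun p : ℕ × List ℕ => p.1 :: p.2)
      ((Set.finite_Iic b).prod ih))
    rintro a ⟨ha, hb⟩
    rcases a with _ | ⟨x, t⟩
    · simp at ha
    · exact ⟨(x, t), ⟨by simpa using hb x (by simp), by simpa using ha,
        fun y hy => hb y (by simp [hy])⟩, rfl⟩

lemma Sset_finite (l len d m : ℕ) : (Sset l len d m).Finite := by
  apply Set.Finite.subset (finite_lists l len)
  rintro a ⟨h1, -, h3, -⟩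
  exact ⟨h1, fun x hx => (h3 x hx).2⟩

lemma Sset_empty (l len d m : ℕ) (hlen : 1 ≤ len) (hmd : d < m) : Sset l len d m = ∅ := by
  ext a
  simp only [Set.mem_empty_iff_false, iff_false]
  rintro ⟨h1, -, h3, -, h5⟩
  rcases a with _ | ⟨x, t⟩
  · simp at h1; omega
  · have := (h3 x (by simp)).1
    have := h5.1
    omega

lemma chooseInt_pascal (N : ℕ) (a : ℤ) (hN : 1 ≤ N) :
    chooseInt N a = chooseInt (N-1) a + chooseInt (N-1) (a-1) := by
  rcases lt_trichotomy a 0 with h | h | h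
  · rw [chooseInt, chooseInt, chooseInt, if_neg (by omega : ¬ (0:ℤ) ≤ a),
      if_neg (by omega : ¬ (0:ℤ) ≤ a), if_neg (by omega : ¬ (0:ℤ) ≤ a - 1)]
  · subst h
    simp [chooseInt]
  · have h1 : (0:ℤ) ≤ a := by omega
    have h2 : (0:ℤ) ≤ a - 1 := by omega
    rw [chooseInt, chooseInt, chooseInt, if_pos h1, if_pos h1, if_pos h2]
    obtain ⟨t, ht⟩ : ∃ t : ℕ, a.toNat = t + 1 := ⟨a.toNat - 1, by omega⟩
    obtain ⟨M, hM⟩ : ∃ M : ℕ, N = M + 1 := ⟨N - 1, by omega⟩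
    have hat : (a - 1).toNat = t := by omega
    rw [ht, hat, hM]
    simp only [Nat.add_sub_cancel]
    rw [Nat.choose_succ_succ M t]
    simp only [Nat.succ_eq_add_one]
    omega

lemma sorted_getLast?_iff {a : List ℕ} (hs : a.Pairwise (· ≤ ·)) (l : ℕ) :
    (a.getLast? = some l) ↔ ((∀ x ∈ a, x ≤ l) ∧ l ∈ a) := by
  induction a with
  | nil => simp
  | cons x t ih =>
    rcases t with _ | ⟨y, s⟩
    · simp only [List.getLast?_singleton, Option.some_inj, List.mem_singleton]
      constructor
      · rintro rfl; exact ⟨by simp, rfl⟩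
      · rintro ⟨h1, h2⟩
        exact h2.symm
    · rw [List.getLast?_cons_cons, ih hs.of_cons]
      have hx := (List.pairwise_cons.mp hs).1
      constructor
      · rintro ⟨h1, h2⟩
        refine ⟨fun z hz => ?_, List.mem_cons_of_mem x h2⟩
        rcases List.mem_cons.mp hz with rfl | hz'
        · exact hx l h2
        · exact h1 z hz'
      · rintro ⟨h1, h2⟩
        have h2' : l ∈ y :: s := by
          rcases List.mem_cons.mp h2 with rfl | h2'
          · have hyl : y ≤ l := h1 y (by simp)
            have hly : l ≤ y := hx y (by simp)
            have hyeq : y = l := le_antisymm hyl hly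
            rw [← hyeq]; simp
          · exact h2'
        exact ⟨fun z hz => h1 z (List.mem_cons_of_mem x hz), h2'⟩

lemma stair_cons {d x : ℕ} {t : List ℕ} : Stair d (x :: t) ↔ x ≤ d ∧ Stair (d+1) t := Iff.rfl

lemma stair_of_big' : ∀ (r : List ℕ) (N d : ℕ), (∀ x ∈ r, x ≤ N) → N ≤ d → Stair d r := by
  intro r
  induction r with
  | nil => intro _ _ _ _; trivial
  | cons x t ih =>
    intro N d h hNd
    exact ⟨le_trans (h x (by simp)) hNd, ih N (d+1) (fun y hy => h y (by simp [hy])) (by omega)⟩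

lemma chooseInt_coe (a b : ℕ) : chooseInt a (b : ℤ) = a.choose b := by
  simp [chooseInt]

lemma chooseInt_neg (a : ℕ) {b : ℤ} (hb : b < 0) : chooseInt a b = 0 := by
  simp [chooseInt, not_le.mpr hb]

lemma sorted_replicate_le (n a : ℕ) : (List.replicate n a).Pairwise (· ≤ ·) :=
  List.pairwise_replicate.mpr (Or.inr le_rfl)

lemma Sset_count (l : ℕ) : ∀ (K len d m : ℕ), len + (l - m) ≤ K → 1 ≤ len → m ≤ l →
    m ≤ d + 1 → l + 1 ≤ d + len →
    (Sset l len d m).ncard + chooseInt (len - 1 + (l - m)) ((l:ℤ) - d - 1)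
      = (len - 1 + (l - m)).choose (l - m) := by
  intro K
  induction K with
  | zero => intro len d m hK h1; omega
  | succ K ih =>
    intro len d m hK h1 h2 h3 h4
    rcases eq_or_lt_of_le h3 with hmd | hmd
    · -- m = d + 1 : empty set
      rw [Sset_empty l len d m h1 (by omega), Set.ncard_empty, zero_add]
      have he : ((l:ℤ) - d - 1) = ((l - m : ℕ) : ℤ) := by omega
      rw [he, chooseInt_coe]
    · have hmd' : m ≤ d := by omega
      rcases eq_or_lt_of_le h2 with hml | hml
      · -- m = l : singleton {replicate len l}
        subst hml
        have hld : m ≤ d := hmd'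
        have hset : Sset m len d m = {List.replicate len m} := by
          ext a
          simp only [Set.mem_singleton_iff, Sset, Set.mem_setOf_eq]
          constructor
          · rintro ⟨ha1, -, ha3, -, -⟩
            rw [List.eq_replicate_iff]
            exact ⟨ha1, fun b hb => le_antisymm (ha3 b hb).2 (ha3 b hb).1⟩
          · rintro rfl
            refine ⟨by simp, ?_, ?_, ?_, ?_⟩
            · exact sorted_replicate_le len m
            · intro x hx
              rw [List.mem_replicate] at hx
              omega
            · rw [sorted_getLast?_iff]
              · refine ⟨fun x hx => ?_, ?_⟩
                · rw [List.mem_replicate] at hx; omega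
                · rw [List.mem_replicate]; omega
              · exact sorted_replicate_le len m
            · exact stair_of_big' _ m d (fun x hx => by rw [List.mem_replicate] at hx; omega) hld
        rw [hset, Set.ncard_singleton, Nat.sub_self, add_zero, Nat.choose_zero_right]
        rw [chooseInt_neg _ (by omega : (m:ℤ) - d - 1 < 0)]
      · -- m < l
        rcases eq_or_lt_of_le h1 with hlen1 | hlen2
        · -- len = 1 : singleton {[l]}
          have hld : l ≤ d := by omega
          have hset : Sset l len d m = {[l]} := by
            ext a
            simp only [Set.mem_singleton_iff, Sset, Set.mem_setOf_eq]
            constructor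
            · rintro ⟨ha1, -, -, ha4, -⟩
              rcases a with _ | ⟨x, t⟩
              · simp at ha1; omega
              · rcases t with _ | ⟨y, s⟩
                · simp only [List.getLast?_singleton, Option.some_inj] at ha4
                  rw [ha4]
                · exfalso; simp at ha1; omega
            · rintro rfl
              refine ⟨by simp; omega, by simp, by intro x hx; simp at hx; omega, by simp, ?_⟩
              exact ⟨hld, trivial⟩
          rw [hset, Set.ncard_singleton]
          rw [chooseInt_neg _ (by omega : (l:ℤ) - d - 1 < 0)]
          have : len - 1 + (l - m) = l - m := by omega
          rw [this, Nat.choose_self]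
        · -- len ≥ 2 : recursion
          have hkey : Sset l len d m
              = Sset l len d (m+1) ∪ (fun t => m :: t) '' Sset l (len-1) (d+1) m := by
            ext a
            constructor
            · rintro ⟨ha1, ha2, ha3, ha4, ha5⟩
              by_cases hall : ∀ z ∈ a, m + 1 ≤ z
              · exact Or.inl ⟨ha1, ha2, fun z hz => ⟨hall z hz, (ha3 z hz).2⟩, ha4, ha5⟩
              · right
                push_neg at hall
                obtain ⟨z, hz, hzm⟩ := hall
                have hzm' : z = m := le_antisymm (by omega) (ha3 z hz).1
                rcases a with _ | ⟨x, t⟩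
                · simp at hz
                · have hxm : x = m := by
                    rcases List.mem_cons.mp hz with rfl | hz'
                    · exact hzm'
                    · have := (List.pairwise_cons.mp ha2).1 z hz'
                      have := (ha3 x (by simp)).1
                      omega
                  subst hxm
                  refine ⟨t, ⟨?_, ha2.of_cons, fun y hy => ha3 y (by simp [hy]), ?_, ha5.2⟩, rfl⟩
                  · simp at ha1; omega
                  · rcases t with _ | ⟨y, s⟩
                    · exfalso; simp at ha1; omega
                    · rwa [List.getLast?_cons_cons] at ha4
            · rintro (⟨ha1, ha2, ha3, ha4, ha5⟩ | ⟨t, ⟨ht1, ht2, ht3, ht4, ht5⟩, rfl⟩)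
              · exact ⟨ha1, ha2, fun z hz => ⟨by have := (ha3 z hz).1; omega, (ha3 z hz).2⟩,
                  ha4, ha5⟩
              · refine ⟨by simp; omega, ?_, ?_, ?_, m.le_refl.trans hmd', ht5⟩
                · rw [List.pairwise_cons]
                  exact ⟨fun y hy => (ht3 y hy).1, ht2⟩
                · intro z hz
                  rcases List.mem_cons.mp hz with rfl | hz'
                  · exact ⟨le_rfl, by omega⟩
                  · exact ⟨(ht3 z hz').1, (ht3 z hz').2⟩
                · rcases t with _ | ⟨y, s⟩
                  · exfalso; simp at ht1; omega
                  · rwa [List.getLast?_cons_cons]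
          have hdisj : Disjoint (Sset l len d (m+1))
              ((fun t => m :: t) '' Sset l (len-1) (d+1) m) := by
            rw [Set.disjoint_left]
            rintro a ⟨-, -, ha3, -, -⟩ ⟨t, -, rfl⟩
            have := (ha3 m (by simp)).1
            omega
          have hcard : (Sset l len d m).ncard
              = (Sset l len d (m+1)).ncard + (Sset l (len-1) (d+1) m).ncard := by
            rw [hkey, Set.ncard_union_eq hdisj (Sset_finite _ _ _ _)
              ((Sset_finite _ _ _ _).image _), Set.ncard_image_of_injective _ List.cons_injective]
          have ih1 := ih len d (m+1) (by omega) h1 (by omega) (by omega) h4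
          have ih2 := ih (len-1) (d+1) m (by omega) (by omega) h2 (by omega) (by omega)
          set N := len - 1 + (l - m) with hN
          have e1 : len - 1 + (l - (m+1)) = N - 1 := by omega
          have e2 : len - 1 - 1 + (l - m) = N - 1 := by omega
          rw [e1] at ih1
          rw [e2] at ih2
          push_cast at ih2
          have e3 : ((l:ℤ) - ((d:ℤ) + 1) - 1) = ((l:ℤ) - d - 1) - 1 := by ring
          rw [e3] at ih2
          have hpas := chooseInt_pascal N ((l:ℤ) - d - 1) (by omega)
          have hpasN : N.choose (l - m) = (N-1).choose (l - m - 1) + (N-1).choose (l - m) := by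
            obtain ⟨M, hM⟩ : ∃ M, N = M + 1 := ⟨N - 1, by omega⟩
            obtain ⟨q, hq⟩ : ∃ q, l - m = q + 1 := ⟨l - m - 1, by omega⟩
            rw [hM, hq]
            simp only [Nat.add_sub_cancel]
            rw [Nat.choose_succ_succ]
          have e4 : l - (m+1) = l - m - 1 := by omega
          rw [e4] at ih1
          omega


lemma sorted_head?_le {a : List ℕ} (hs : a.Pairwise (· ≤ ·)) {m : ℕ} (h : a.head? = some m) :
    ∀ z ∈ a, m ≤ z := by
  rcases a with _ | ⟨x, t⟩
  · simp at h
  · simp only [List.head?_cons, Option.some_inj] at h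
    subst h
    intro z hz
    rcases List.mem_cons.mp hz with rfl | hz'
    · exact le_rfl
    · exact (List.pairwise_cons.mp hs).1 z hz'

lemma mem_Sset_diff {l len d m : ℕ} {a : List ℕ} (hlen : 1 ≤ len) :
    a ∈ Sset l len d m \ Sset l len d (m+1) ↔
      (a.length = len ∧ a.Pairwise (· ≤ ·) ∧ (∀ x ∈ a, x ≤ l) ∧ a.getLast? = some l ∧
        a.head? = some m ∧ Stair d a) := by
  constructor
  · rintro ⟨⟨h1, h2, h3, h4, h5⟩, hnot⟩
    rcases a with _ | ⟨x, t⟩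
    · simp at h1; omega
    · have hxm : x = m := by
        by_contra hxm
        have hx1 : m + 1 ≤ x := by
          have := (h3 x (by simp)).1; omega
        exact hnot ⟨h1, h2, fun z hz => ⟨by
          rcases List.mem_cons.mp hz with rfl | hz'
          · exact hx1
          · have := (List.pairwise_cons.mp h2).1 z hz'; omega, (h3 z hz).2⟩, h4, h5⟩
      subst hxm
      exact ⟨h1, h2, fun z hz => (h3 z hz).2, h4, rfl, h5⟩
  · rintro ⟨h1, h2, h3, h4, h5, h6⟩
    have hge := sorted_head?_le h2 h5
    refine ⟨⟨h1, h2, fun z hz => ⟨hge z hz, h3 z hz⟩, h4, h6⟩, ?_⟩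
    rintro ⟨-, -, hmem, -, -⟩
    have hma : m ∈ a := by
      rcases a with _ | ⟨x, t⟩
      · simp at h5
      · simp only [List.head?_cons, Option.some_inj] at h5
        simp [h5]
    have := (hmem m hma).1
    omega

lemma opSet_char (n k l m : ℕ) (hm : 1 ≤ m) (hmk : m ≤ k) (hl : k + 1 ≤ l) (hn : l ≤ n)
    (a : List ℕ) :
    (IsOrderedPrefSet n a ∧ flaws n a = k ∧ (∀ x ∈ a, x ≤ l) ∧ l ∈ a ∧ a.head? = some m)
      ↔ a ∈ (Sset l n (k+1) m \ Sset l n (k+1) (m+1)) \ (Sset l n k m \ Sset l n k (m+1)) := by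
  have hn1 : 1 ≤ n := by omega
  constructor
  · rintro ⟨⟨⟨hlen, hbd⟩, hsort⟩, hfl, hle, hmem, hhead⟩
    have hpark : flaws n a = park n 0 a := flaws_eq_park n a hsort hbd
    have hent : ∀ x ∈ a, x ≤ n := fun x hx => (hbd x hx).2
    have hstair1 : Stair (k+1) a :=
      (park_le_iff_stair n k a 0 (k+1) hent (by omega) (by omega)).mp (by omega)
    have hstair2 : ¬ Stair k a := by
      intro hs
      have := (park_le_iff_stair n (k-1) a 0 k hent (by omega) (by omega)).mpr hs
      omega
    rw [Set.mem_diff, mem_Sset_diff hn1, mem_Sset_diff hn1]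
    refine ⟨⟨hlen, hsort, hle, (sorted_getLast?_iff hsort l).mpr ⟨hle, hmem⟩, hhead, hstair1⟩, ?_⟩
    rintro ⟨-, -, -, -, -, hs⟩
    exact hstair2 hs
  · rw [Set.mem_diff, mem_Sset_diff hn1, mem_Sset_diff hn1]
    rintro ⟨⟨h1, h2, h3, h4, h5, h6⟩, hnot⟩
    have hge := sorted_head?_le h2 h5
    have hbd : ∀ x ∈ a, 1 ≤ x ∧ x ≤ n := fun x hx => ⟨by have := hge x hx; omega,
      le_trans (h3 x hx) hn⟩
    have hpark : flaws n a = park n 0 a := flaws_eq_park n a h2 hbd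
    have hent : ∀ x ∈ a, x ≤ n := fun x hx => (hbd x hx).2
    have hp1 : park n 0 a ≤ k :=
      (park_le_iff_stair n k a 0 (k+1) hent (by omega) (by omega)).mpr h6
    have hp2 : ¬ park n 0 a ≤ k - 1 := by
      intro hp
      exact hnot ⟨h1, h2, h3, h4, h5,
        (park_le_iff_stair n (k-1) a 0 k hent (by omega) (by omega)).mp hp⟩
    obtain ⟨hle', hmem'⟩ := (sorted_getLast?_iff h2 l).mp h4
    exact ⟨⟨⟨h1, hbd⟩, h2⟩, by omega, hle', hmem', h5⟩

lemma Sset_mono_m (l len d m : ℕ) : Sset l len d (m+1) ⊆ Sset l len d m := by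
  rintro a ⟨h1, h2, h3, h4, h5⟩
  exact ⟨h1, h2, fun z hz => ⟨by have := (h3 z hz).1; omega, (h3 z hz).2⟩, h4, h5⟩

theorem stmt13 (n k l m : ℕ) (hm : 1 ≤ m) (hmk : m ≤ k) (hl : k + 1 ≤ l) (hn : l ≤ n) :
    (n - m + k + 2) * (n + l - m - 1) * opMaxLead n k l m
      = ((n - l + 2 * k - m + 4) * (n - m + k + 1) - (l - k - 2)) *
          chooseInt (n + l - m - 1) ((l : ℤ) - k - 2) := by
  have hn1 : 1 ≤ n := by omega
  have hset : {a : List ℕ | IsOrderedPrefSet n a ∧ flaws n a = k ∧ (∀ x ∈ a, x ≤ l) ∧ l ∈ a ∧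
      a.head? = some m}
      = (Sset l n (k+1) m \ Sset l n (k+1) (m+1)) \ (Sset l n k m \ Sset l n k (m+1)) :=
    Set.ext (opSet_char n k l m hm hmk hl hn)
  have f1 := Sset_finite l n (k+1) m
  have f2 := Sset_finite l n (k+1) (m+1)
  have f3 := Sset_finite l n k m
  have f4 := Sset_finite l n k (m+1)
  have s1 : Sset l n (k+1) (m+1) ⊆ Sset l n (k+1) m := Sset_mono_m _ _ _ _
  have s2 : Sset l n k (m+1) ⊆ Sset l n k m := Sset_mono_m _ _ _ _
  have sX : (Sset l n k m \ Sset l n k (m+1)) ⊆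
      (Sset l n (k+1) m \ Sset l n (k+1) (m+1)) := by
    intro a ha
    rw [mem_Sset_diff hn1] at ha ⊢
    obtain ⟨h1, h2, h3, h4, h5, h6⟩ := ha
    exact ⟨h1, h2, h3, h4, h5, stair_mono a k (k+1) (by omega) h6⟩
  have hopcard : opMaxLead n k l m
      = ((Sset l n (k+1) m).ncard - (Sset l n (k+1) (m+1)).ncard)
        - ((Sset l n k m).ncard - (Sset l n k (m+1)).ncard) := by
    rw [opMaxLead, hset, Set.ncard_diff sX f3.diff, Set.ncard_diff s1 f2, Set.ncard_diff s2 f4]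
  have hle1 : (Sset l n (k+1) (m+1)).ncard ≤ (Sset l n (k+1) m).ncard :=
    Set.ncard_le_ncard s1 f1
  have hle2 : (Sset l n k (m+1)).ncard ≤ (Sset l n k m).ncard := Set.ncard_le_ncard s2 f3
  have hle3 : (Sset l n k m).ncard - (Sset l n k (m+1)).ncard
      ≤ (Sset l n (k+1) m).ncard - (Sset l n (k+1) (m+1)).ncard := by
    have := Set.ncard_le_ncard sX f1.diff
    rwa [Set.ncard_diff s1 f2, Set.ncard_diff s2 f4] at this
  -- counting formulas
  set N1 := n - 1 + (l - m) with hN1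
  set N2 := n - 1 + (l - (m+1)) with hN2
  have c1 := Sset_count l (n + l) n (k+1) m (by omega) hn1 (by omega) (by omega) (by omega)
  have c2 := Sset_count l (n + l) n (k+1) (m+1) (by omega) hn1 (by omega) (by omega) (by omega)
  have c3 := Sset_count l (n + l) n k m (by omega) hn1 (by omega) (by omega) (by omega)
  have c4 := Sset_count l (n + l) n k (m+1) (by omega) hn1 (by omega) (by omega) (by omega)
  push_cast at c1 c2 c3 c4
  rw [← hN1] at c1 c3
  rw [← hN2] at c2 c4
  rw [show (l:ℤ) - ((k:ℤ)+1) - 1 = (l:ℤ) - k - 2 by ring] at c1 c2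
  rw [show (l:ℤ) - (k:ℤ) - 1 = ((l:ℤ) - k - 2) + 1 by ring] at c3 c4
  set D := (l:ℤ) - k - 2 with hD
  have hpas := chooseInt_pascal N1 (D + 1) (by omega)
  have hpas2 := chooseInt_pascal N1 D (by omega)
  rw [show N1 - 1 = N2 by omega] at hpas hpas2
  rw [show D + 1 - 1 = D by ring] at hpas
  -- main count for opMaxLead
  have hop : opMaxLead n k l m + chooseInt N1 D = 2 * chooseInt N2 D := by omega
  rcases lt_or_ge D 0 with hDneg | hDpos
  · have z1 : chooseInt N1 D = 0 := chooseInt_neg _ hDneg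
    have z2 : chooseInt N2 D = 0 := chooseInt_neg _ hDneg
    have hop0 : opMaxLead n k l m = 0 := by omega
    have hr : chooseInt (n + l - m - 1) ((l:ℤ) - k - 2) = 0 := chooseInt_neg _ (by omega)
    rw [hop0, hr, mul_zero, mul_zero]
  · -- here l ≥ k + 2
    have hlk2 : k + 2 ≤ l := by omega
    obtain ⟨dd, hdd⟩ : ∃ d, d = l - k - 2 := ⟨l - k - 2, rfl⟩
    have hddD : D.toNat = dd := by omega
    have hch1 : chooseInt N1 D = N1.choose dd := by rw [chooseInt, if_pos hDpos, hddD]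
    have hch2 : chooseInt N2 D = N2.choose dd := by rw [chooseInt, if_pos hDpos, hddD]
    set B' := chooseInt N2 (D - 1) with hB'
    -- key choose relation
    have hkeyNat : (n - m + k + 1) * B' = dd * N2.choose dd := by
      rcases eq_or_lt_of_le hDpos with hD0 | hD1
      · have : dd = 0 := by omega
        have : B' = 0 := by
          rw [hB', chooseInt_neg _ (by omega)]
        simp [this, ‹dd = 0›]
      · have hdd1 : 1 ≤ dd := by omega
        have hBval : B' = N2.choose (dd - 1) := by
          rw [hB', chooseInt, if_pos (by omega : (0:ℤ) ≤ D - 1)]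
          congr 1
          omega
        have hcs := Nat.choose_succ_right_eq N2 (dd - 1)
        rw [show dd - 1 + 1 = dd by omega] at hcs
        rw [show N2 - (dd - 1) = n - m + k + 1 by omega] at hcs
        rw [hBval, mul_comm (n - m + k + 1), mul_comm dd]
        exact hcs.symm
    have hopB : opMaxLead n k l m + B' = N2.choose dd := by omega
    -- final arithmetic in ℤ
    rw [show chooseInt (n + l - m - 1) ((l:ℤ) - k - 2) = N1.choose dd from by
      rw [show n + l - m - 1 = N1 by omega]; exact hch1]
    have hb1 : m ≤ n := by omega
    have hb2 : 1 ≤ n + l - m := by omega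
    have hb3 : m ≤ n + l := by omega
    have hb4 : k ≤ l := by omega
    have hb5 : 2 ≤ l - k := by omega
    have hb6 : l - k - 2 ≤ (n - l + 2 * k - m + 4) * (n - m + k + 1) := by
      have h1 : 1 ≤ n - l + 2 * k - m + 4 := by omega
      have h2 : n - m + k + 1 ≤ (n - l + 2 * k - m + 4) * (n - m + k + 1) :=
        Nat.le_mul_of_pos_left _ (by omega)
      omega
    have hb7 : m ≤ n - l + 2 * k := by omega
    zify [hb1, hb2, hb3, hn, hb4, hb5, hb6, hb7]
    have hopZ : (opMaxLead n k l m : ℤ) = (N2.choose dd : ℤ) - (B' : ℤ) := by omega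
    have hAZ : ((N1.choose dd : ℕ) : ℤ) = (N2.choose dd : ℤ) + (B' : ℤ) := by omega
    have hddZ : ((dd : ℕ) : ℤ) = D := by omega
    have hkeyZ : ((n:ℤ) - m + k + 1) * (B' : ℤ) = D * (N2.choose dd : ℤ) := by
      zify [hb1] at hkeyNat
      rw [← hddZ]
      exact hkeyNat
    rw [hD] at hkeyZ
    linear_combination (((n:ℤ) - m + k + 2) * ((n:ℤ) - m + k + 1 + ((l:ℤ) - k - 2))) * hopZ
      - ((((n:ℤ) - m + k + 1 - ((l:ℤ) - k - 2) + 1) * ((n:ℤ) - m + k + 1) - ((l:ℤ) - k - 2)))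
          * hAZ
      - (2 * ((n:ℤ) - m + k + 2)) * hkeyZ
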